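/- Define the binary Shannon entropy H₂(x) = −x·log₂x − (1−x)·log₂(1−x), with the convention 0·log₂0 = 0. Then: (i) there exists p₁ ∈ (0.316, 0.317) with 1 − H₂(p₁) = p₁²; (ii) for all p ∈ [0.317, 1], 1 − H₂(p) ≤ p². Consequently, for all p ∈ [0.317, 1], the classical-trajectory upper bound Q_C^UB(p,p) = 1 − H₂(p) is at most the quantum-switch lower bound Q_QS^LB(p,p) = p² + max{0, 1 − p² + H₂(p²) − 2H₂(p)}. -/

import Mathlib

set_option maxHeartbeats 2000000


/-- The binary Shannon entropy `H₂(x) = −x·log₂x − (1−x)·log₂(1−x)`,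
with the convention `0·log₂0 = 0` (automatic since `Real.logb 2 0 = 0`). -/
noncomputable def H2 (x : ℝ) : ℝ := -(x * Real.logb 2 x) - (1 - x) * Real.logb 2 (1 - x)

/-- The bottleneck upper bound `Q_C^UB(p,q) = 1 − max{H₂(p), H₂(q)}` on any classical
trajectory. -/
noncomputable def QCUB (p q : ℝ) : ℝ := 1 - max (H2 p) (H2 q)

/-- The lower bound `Q_QS^LB(p,q)` on the quantum-switch capacity (Proposition 1). -/
noncomputable def QSLB (p q : ℝ) : ℝ :=
  p * q + max 0 (1 - p * q + H2 (p * q) - H2 p - H2 q)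

section Aux

open Real

lemma log2_pos : (0:ℝ) < Real.log 2 := Real.log_pos (by norm_num)

lemma log_upper_aux (x : ℝ) (n k : ℕ) (b : ℝ) (hx : 0 < x) (hn : 0 < (n:ℝ))
    (h : (k : ℝ) * 0.6931471808 + (x ^ n / 2 ^ k - 1) ≤ (n : ℝ) * b) :
    Real.log x ≤ b := by
  have hy : Real.log (x ^ n / 2 ^ k) = (n : ℝ) * Real.log x - (k : ℝ) * Real.log 2 := by
    rw [Real.log_div (by positivity) (by positivity), Real.log_pow, Real.log_pow]
  have hle : Real.log (x ^ n / 2 ^ k) ≤ x ^ n / 2 ^ k - 1 :=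
    Real.log_le_sub_one_of_pos (by positivity)
  have l2 : Real.log 2 < 0.6931471808 := Real.log_two_lt_d9
  have hk : (0:ℝ) ≤ (k:ℝ) := Nat.cast_nonneg k
  have : (n : ℝ) * Real.log x ≤ (n : ℝ) * b := by nlinarith
  exact le_of_mul_le_mul_left (by linarith [this]) hn

lemma log_lower_aux (x : ℝ) (n k : ℕ) (b : ℝ) (hx : 0 < x) (hn : 0 < (n:ℝ))
    (h : (n : ℝ) * b ≤ (k : ℝ) * 0.6931471803 + (1 - 2 ^ k / x ^ n)) :
    b ≤ Real.log x := by
  have hy : Real.log (x ^ n / 2 ^ k) = (n : ℝ) * Real.log x - (k : ℝ) * Real.log 2 := by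
    rw [Real.log_div (by positivity) (by positivity), Real.log_pow, Real.log_pow]
  have hle : Real.log ((x ^ n / 2 ^ k)⁻¹) ≤ (x ^ n / 2 ^ k)⁻¹ - 1 :=
    Real.log_le_sub_one_of_pos (by positivity)
  rw [Real.log_inv] at hle
  have hinv : (x ^ n / 2 ^ k)⁻¹ = 2 ^ k / x ^ n := by
    rw [inv_div]
  rw [hinv] at hle
  have l2 : (0.6931471803:ℝ) < Real.log 2 := Real.log_two_gt_d9
  have hk : (0:ℝ) ≤ (k:ℝ) := Nat.cast_nonneg k
  have : (n : ℝ) * b ≤ (n : ℝ) * Real.log x := by nlinarith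
  exact le_of_mul_le_mul_left (by linarith [this]) hn

lemma H2_mul_log2 (x : ℝ) : H2 x * Real.log 2 = -(x * Real.log x) - (1 - x) * Real.log (1 - x) := by
  unfold H2 Real.logb
  have h : Real.log 2 ≠ 0 := ne_of_gt log2_pos
  field_simp

lemma H2_eq_binEntropy (x : ℝ) : H2 x = Real.binEntropy x / Real.log 2 := by
  unfold H2 Real.binEntropy Real.logb
  rw [Real.log_inv, Real.log_inv]
  ring

lemma continuous_H2 : Continuous H2 := by
  have : H2 = fun x => Real.binEntropy x / Real.log 2 := funext H2_eq_binEntropy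
  rw [this]
  exact Real.binEntropy_continuous.div_const _

lemma concaveOn_H2 : ConcaveOn ℝ (Set.Icc 0 1) H2 := by
  have h := (Real.strictConcave_binEntropy.concaveOn).smul
    (c := (Real.log 2)⁻¹) (by positivity)
  have he : H2 = fun x => (Real.log 2)⁻¹ • Real.binEntropy x := by
    funext x
    rw [H2_eq_binEntropy, smul_eq_mul, div_eq_inv_mul]
  rw [he]
  exact h

lemma H2_one : H2 1 = 0 := by
  unfold H2
  simp

lemma H2_half : H2 (1/2 : ℝ) = 1 := by
  have : Real.logb 2 ((1:ℝ)/2) = -1 := by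
    rw [show ((1:ℝ)/2) = 2⁻¹ by norm_num, Real.logb_inv, Real.logb_self_eq_one] <;> norm_num
  unfold H2
  rw [show (1:ℝ) - 1/2 = 1/2 by norm_num, this]
  ring

/-- Key chord-vs-tangent lemma: on `[a,b] ⊆ [0,1]`, if the chord of `H2` plus the tangent
line of `p²` at `m` dominates 1 at both endpoints, then `1 - H2 p ≤ p²` on `[a,b]`. -/
lemma key_lemma (a b m Ha Hb : ℝ) (ha0 : 0 ≤ a) (hb1 : b ≤ 1) (hab : a < b)
    (hHa : Ha ≤ H2 a) (hHb : Hb ≤ H2 b)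
    (h1 : (1:ℝ) ≤ Ha + 2*m*a - m^2) (h2 : (1:ℝ) ≤ Hb + 2*m*b - m^2)
    (p : ℝ) (hp : p ∈ Set.Icc a b) : 1 - H2 p ≤ p^2 := by
  obtain ⟨hpa, hpb⟩ := hp
  have hba : 0 < b - a := by linarith
  set l := (b - p)/(b - a) with hl
  have hl0 : 0 ≤ l := div_nonneg (by linarith) hba.le
  have hl1 : l ≤ 1 := by
    rw [hl, div_le_one hba]; linarith
  have hcomb : l • a + (1 - l) • b = p := by
    rw [smul_eq_mul, smul_eq_mul, hl]
    field_simp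
    ring
  have hchord := concaveOn_H2.2 (x := a) (y := b)
    ⟨ha0, by linarith⟩ ⟨by linarith, hb1⟩ hl0 (by linarith : (0:ℝ) ≤ 1 - l)
    (by ring)
  rw [hcomb] at hchord
  rw [smul_eq_mul, smul_eq_mul] at hchord
  have hHa' : l * Ha ≤ l * H2 a := mul_le_mul_of_nonneg_left hHa hl0
  have hHb' : (1 - l) * Hb ≤ (1 - l) * H2 b :=
    mul_le_mul_of_nonneg_left hHb (by linarith)
  have h1' : l * 1 ≤ l * (Ha + 2*m*a - m^2) := mul_le_mul_of_nonneg_left h1 hl0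
  have h2' : (1 - l) * 1 ≤ (1 - l) * (Hb + 2*m*b - m^2) :=
    mul_le_mul_of_nonneg_left h2 (by linarith)
  have hpval : l * a + (1 - l) * b = p := by
    have := hcomb; rw [smul_eq_mul, smul_eq_mul] at this; exact this
  have htan : 2*m*p - m^2 ≤ p^2 := by nlinarith [sq_nonneg (p - m)]
  have hx : l*Ha + (1-l)*Hb + (2*m*p - m^2) =
      l * (Ha + 2*m*a - m^2) + (1-l) * (Hb + 2*m*b - m^2) := by
    rw [← hpval]; ring
  linarith [hchord, hHa', hHb', h1', h2', htan, hx]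

end Aux

theorem corollary2_threshold :
    (∃ p₁ ∈ Set.Ioo (0.316:ℝ) 0.317, 1 - H2 p₁ = p₁ ^ 2) ∧
    (∀ p ∈ Set.Icc (0.317:ℝ) 1, 1 - H2 p ≤ p ^ 2) ∧
    (∀ p ∈ Set.Icc (0.317:ℝ) 1, QCUB p p ≤ QSLB p p) := by
  -- numeric bounds on logs of the integers we need
  have l2pos := log2_pos
  have l2hi : Real.log 2 < 0.6931471808 := Real.log_two_lt_d9
  have l2lo : (0.6931471803:ℝ) < Real.log 2 := Real.log_two_gt_d9
  have l3lo : (1098612247/1000000000 : ℝ) ≤ Real.log 3 :=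
    log_lower_aux 3 53 84 _ (by norm_num) (by norm_num) (by norm_num)
  have l3hi : Real.log 3 ≤ (1098612331/1000000000 : ℝ) :=
    log_upper_aux 3 53 84 _ (by norm_num) (by norm_num) (by norm_num)
  have l5lo : (201179719/125000000 : ℝ) ≤ Real.log 5 :=
    log_lower_aux 5 59 137 _ (by norm_num) (by norm_num) (by norm_num)
  have l5hi : Real.log 5 ≤ (201179759/125000000 : ℝ) :=
    log_upper_aux 5 59 137 _ (by norm_num) (by norm_num) (by norm_num)
  have l7lo : (243238729/125000000 : ℝ) ≤ Real.log 7 :=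
    log_lower_aux 7 83 233 _ (by norm_num) (by norm_num) (by norm_num)
  have l7hi : Real.log 7 ≤ (486477617/250000000 : ℝ) :=
    log_upper_aux 7 83 233 _ (by norm_num) (by norm_num) (by norm_num)
  have l13lo : (641237223/250000000 : ℝ) ≤ Real.log 13 :=
    log_lower_aux 13 10 37 _ (by norm_num) (by norm_num) (by norm_num)
  have l13hi : Real.log 13 ≤ (40077341/15625000 : ℝ) :=
    log_upper_aux 13 10 37 _ (by norm_num) (by norm_num) (by norm_num)
  have l20lo : (2995732113/1000000000 : ℝ) ≤ Real.log 20 :=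
    log_lower_aux 20 59 255 _ (by norm_num) (by norm_num) (by norm_num)
  have l20hi : Real.log 20 ≤ (1497866217/500000000 : ℝ) :=
    log_upper_aux 20 59 255 _ (by norm_num) (by norm_num) (by norm_num)
  have l79lo : (873889569/200000000 : ℝ) ≤ Real.log 79 :=
    log_lower_aux 79 79 498 _ (by norm_num) (by norm_num) (by rw [show (2:ℝ) ^ 498 = ((2:ℝ) ^ 249) ^ 2 by rw [← pow_mul]]; norm_num)
  have l79hi : Real.log 79 ≤ (218472393/50000000 : ℝ) :=
    log_upper_aux 79 79 498 _ (by norm_num) (by norm_num) (by rw [show (2:ℝ) ^ 498 = ((2:ℝ) ^ 249) ^ 2 by rw [← pow_mul]]; norm_num)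
  have l171lo : (10283327/2000000 : ℝ) ≤ Real.log 171 :=
    log_lower_aux 171 67 497 _ (by norm_num) (by norm_num) (by rw [show (2:ℝ) ^ 497 = ((2:ℝ) ^ 71) ^ 7 by rw [← pow_mul]]; norm_num)
  have l171hi : Real.log 171 ≤ (5141663613/1000000000 : ℝ) :=
    log_upper_aux 171 67 497 _ (by norm_num) (by norm_num) (by rw [show (2:ℝ) ^ 497 = ((2:ℝ) ^ 71) ^ 7 by rw [← pow_mul]]; norm_num)
  have l250lo : (5521460419/1000000000 : ℝ) ≤ Real.log 250 :=
    log_lower_aux 250 29 231 _ (by norm_num) (by norm_num) (by norm_num)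
  have l250hi : Real.log 250 ≤ (2760730709/500000000 : ℝ) :=
    log_upper_aux 250 29 231 _ (by norm_num) (by norm_num) (by norm_num)
  have l317lo : (5758901637/1000000000 : ℝ) ≤ Real.log 317 :=
    log_lower_aux 317 107 889 _ (by norm_num) (by norm_num) (by rw [show (2:ℝ) ^ 889 = ((2:ℝ) ^ 127) ^ 7 by rw [← pow_mul]]; norm_num)
  have l317hi : Real.log 317 ≤ (575890191/100000000 : ℝ) :=
    log_upper_aux 317 107 889 _ (by norm_num) (by norm_num) (by rw [show (2:ℝ) ^ 889 = ((2:ℝ) ^ 127) ^ 7 by rw [← pow_mul]]; norm_num)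
  have l683lo : (4079059/625000 : ℝ) ≤ Real.log 683 :=
    log_lower_aux 683 77 725 _ (by norm_num) (by norm_num) (by rw [show (2:ℝ) ^ 725 = ((2:ℝ) ^ 145) ^ 5 by rw [← pow_mul]]; norm_num)
  have l683hi : Real.log 683 ≤ (3263247661/500000000 : ℝ) :=
    log_upper_aux 683 77 725 _ (by norm_num) (by norm_num) (by rw [show (2:ℝ) ^ 725 = ((2:ℝ) ^ 145) ^ 5 by rw [← pow_mul]]; norm_num)
  have l1000lo : (345387739/50000000 : ℝ) ≤ Real.log 1000 :=
    log_lower_aux 1000 29 289 _ (by norm_num) (by norm_num) (by rw [show (2:ℝ) ^ 289 = ((2:ℝ) ^ 17) ^ 17 by rw [← pow_mul]]; norm_num)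
  have l1000hi : Real.log 1000 ≤ (345387789/50000000 : ℝ) :=
    log_upper_aux 1000 29 289 _ (by norm_num) (by norm_num) (by rw [show (2:ℝ) ^ 289 = ((2:ℝ) ^ 17) ^ 17 by rw [← pow_mul]]; norm_num)
  -- H2 values at rational points
  have hexp : ∀ c cp d : ℝ, 0 < c → 0 < cp → 0 < d → c + cp = d →
      H2 (c/d) * Real.log 2 =
        (c/d) * (Real.log d - Real.log c) + (cp/d) * (Real.log d - Real.log cp) := by
    intro c cp d hc hcp hd hsum
    rw [H2_mul_log2]
    rw [show (1:ℝ) - c/d = cp/d by field_simp; linarith]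
    rw [Real.log_div hc.ne' hd.ne', Real.log_div hcp.ne' hd.ne']
    ring
  have h316 : H2 (0.316:ℝ) ≤ 8999793/10000000 := by
    have e := hexp 79 171 250 (by norm_num) (by norm_num) (by norm_num) (by norm_num)
    rw [show ((79:ℝ)/250) = 0.316 by norm_num] at e
    have hmul : (8999793/10000000 : ℝ) * Real.log 2 ≥ H2 (0.316:ℝ) * Real.log 2 := by
      rw [e]; nlinarith
    exact le_of_mul_le_mul_right hmul l2pos
  have h317 : (9010879/10000000 : ℝ) ≤ H2 (0.317:ℝ) := by
    have e := hexp 317 683 1000 (by norm_num) (by norm_num) (by norm_num) (by norm_num)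
    rw [show ((317:ℝ)/1000) = 0.317 by norm_num] at e
    have hmul : (9010879/10000000 : ℝ) * Real.log 2 ≤ H2 (0.317:ℝ) * Real.log 2 := by
      rw [e]; nlinarith
    exact le_of_mul_le_mul_right hmul l2pos
  have h35 : (72974/78125 : ℝ) ≤ H2 (0.35:ℝ) := by
    have e := hexp 7 13 20 (by norm_num) (by norm_num) (by norm_num) (by norm_num)
    rw [show ((7:ℝ)/20) = 0.35 by norm_num] at e
    have hmul : (72974/78125 : ℝ) * Real.log 2 ≤ H2 (0.35:ℝ) * Real.log 2 := by
      rw [e]; nlinarith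
    exact le_of_mul_le_mul_right hmul l2pos
  have h40 : (9709503/10000000 : ℝ) ≤ H2 (0.4:ℝ) := by
    have e := hexp 2 3 5 (by norm_num) (by norm_num) (by norm_num) (by norm_num)
    rw [show ((2:ℝ)/5) = 0.4 by norm_num] at e
    have hmul : (9709503/10000000 : ℝ) * Real.log 2 ≤ H2 (0.4:ℝ) * Real.log 2 := by
      rw [e]; nlinarith
    exact le_of_mul_le_mul_right hmul l2pos
  have h65 : (72974/78125 : ℝ) ≤ H2 (0.65:ℝ) := by
    have e := hexp 13 7 20 (by norm_num) (by norm_num) (by norm_num) (by norm_num)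
    rw [show ((13:ℝ)/20) = 0.65 by norm_num] at e
    have hmul : (72974/78125 : ℝ) * Real.log 2 ≤ H2 (0.65:ℝ) * Real.log 2 := by
      rw [e]; nlinarith
    exact le_of_mul_le_mul_right hmul l2pos
  have h80 : (3609639/5000000 : ℝ) ≤ H2 (0.8:ℝ) := by
    have e := hexp 4 1 5 (by norm_num) (by norm_num) (by norm_num) (by norm_num)
    rw [show ((4:ℝ)/5) = 0.8 by norm_num] at e
    have hlog4 : Real.log 4 = 2 * Real.log 2 := by
      rw [show (4:ℝ) = 2^2 by norm_num, Real.log_pow]; push_cast; ring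
    have hlog1 : Real.log 1 = 0 := Real.log_one
    have hmul : (3609639/5000000 : ℝ) * Real.log 2 ≤ H2 (0.8:ℝ) * Real.log 2 := by
      rw [e, hlog4, hlog1]; nlinarith
    exact le_of_mul_le_mul_right hmul l2pos
  -- Part (ii)
  have part2 : ∀ p ∈ Set.Icc (0.317:ℝ) 1, 1 - H2 p ≤ p ^ 2 := by
    intro p ⟨hp1, hp2⟩
    rcases le_or_gt p 0.35 with h | h
    · exact key_lemma 0.317 0.35 0.33 (9010879/10000000) (72974/78125)
        (by norm_num) (by norm_num) (by norm_num) h317 h35 (by norm_num) (by norm_num)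
        p ⟨hp1, h⟩
    rcases le_or_gt p 0.4 with h' | h'
    · exact key_lemma 0.35 0.4 (3/8) (72974/78125) (9709503/10000000)
        (by norm_num) (by norm_num) (by norm_num) h35 h40 (by norm_num) (by norm_num)
        p ⟨h.le, h'⟩
    rcases le_or_gt p 0.5 with h'' | h'' 
    · exact key_lemma 0.4 0.5 0.45 (9709503/10000000) 1
        (by norm_num) (by norm_num) (by norm_num) h40
        (by rw [show (0.5:ℝ) = 1/2 by norm_num, H2_half]) (by norm_num) (by norm_num)
        p ⟨h'.le, h''⟩
    rcases le_or_gt p 0.65 with h3 | h3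
    · exact key_lemma 0.5 0.65 0.575 1 (72974/78125)
        (by norm_num) (by norm_num) (by norm_num)
        (by rw [show (0.5:ℝ) = 1/2 by norm_num, H2_half]) h65 (by norm_num) (by norm_num)
        p ⟨h''.le, h3⟩
    rcases le_or_gt p 0.8 with h4 | h4
    · exact key_lemma 0.65 0.8 0.725 (72974/78125) (3609639/5000000)
        (by norm_num) (by norm_num) (by norm_num) h65 h80 (by norm_num) (by norm_num)
        p ⟨h3.le, h4⟩
    · exact key_lemma 0.8 1 1 (3609639/5000000) 0
        (by norm_num) (by norm_num) (by norm_num) h80 (by rw [H2_one]) (by norm_num)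
        (by norm_num) p ⟨h4.le, hp2⟩
  refine ⟨?_, part2, ?_⟩
  · -- Part (i): intermediate value theorem
    set g : ℝ → ℝ := fun p => 1 - H2 p - p ^ 2 with hg
    have hcont : ContinuousOn g (Set.Icc (0.316:ℝ) 0.317) :=
      (Continuous.sub (continuous_const.sub continuous_H2) (continuous_pow 2)).continuousOn
    have hga : 0 < g 0.316 := by
      simp only [hg]; nlinarith [h316]
    have hgb : g 0.317 < 0 := by
      simp only [hg]; nlinarith [h317]
    have hsub : Set.Ioo (g 0.317) (g 0.316) ⊆ g '' Set.Ioo 0.316 0.317 :=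
      intermediate_value_Ioo' (by norm_num) hcont
    obtain ⟨p₁, hp₁, hgp₁⟩ := hsub ⟨hgb, hga⟩
    exact ⟨p₁, hp₁, by simp only [hg] at hgp₁; linarith⟩
  · -- Part (iii)
    intro p hp
    have h := part2 p hp
    have hQC : QCUB p p = 1 - H2 p := by
      unfold QCUB; rw [max_self]
    have hQS : p * p ≤ QSLB p p := by
      unfold QSLB
      have : (0:ℝ) ≤ max 0 (1 - p * p + H2 (p * p) - H2 p - H2 p) := le_max_left _ _
      linarith
    rw [hQC]
    nlinarith [h, hQS]
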